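/- Let 0 < a < b, d ∈ ℕ even with the rescaled Chebyshev polynomial T_{[a,b],d}(Λ) := T_d((2Λ − (b+a))/(b−a)), and let C := sup_{t∈[a,b]} (T_{[a,b],d}(t) + 1) = 2. Then the rational function g(Λ) := (2 − (T_{[a,b],d}(Λ) + 1)) / ((Λ − a)(b − Λ)) is a polynomial that is nonnegative on all of ℝ. -/
import Mathlib


open Polynomial

/-- The Chebyshev polynomial of degree `k` rescaled to the interval `[a,b]`. -/
noncomputable def chebyOn (a b : ℝ) (k : ℕ) : Polynomial ℝ :=
  (Polynomial.Chebyshev.T ℝ k).comp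
    (Polynomial.C (2 / (b - a)) * Polynomial.X - Polynomial.C ((b + a) / (b - a)))

private lemma T_eval_ge (x : ℝ) (hx : 1 ≤ x) : ∀ n : ℕ,
    1 ≤ (Polynomial.Chebyshev.T ℝ (n : ℤ)).eval x ∧
    (Polynomial.Chebyshev.T ℝ (n : ℤ)).eval x ≤
      (Polynomial.Chebyshev.T ℝ ((n : ℤ) + 1)).eval x := by
  intro n
  induction n with
  | zero => simp [Polynomial.Chebyshev.T_zero, Polynomial.Chebyshev.T_one]; linarith
  | succ n ih =>
    have h2 := congrArg (Polynomial.eval x) (Polynomial.Chebyshev.T_add_two ℝ (n : ℤ))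
    simp only [Polynomial.eval_sub, Polynomial.eval_mul, Polynomial.eval_ofNat,
      Polynomial.eval_X] at h2
    push_cast
    constructor
    · linarith [ih.1, ih.2]
    · have h1 : ((n : ℤ) + 1 + 1) = (n : ℤ) + 2 := by ring
      rw [h1, h2]
      nlinarith [ih.1, ih.2]

private lemma T_eval_neg (x : ℝ) : ∀ n : ℕ,
    (Polynomial.Chebyshev.T ℝ (n : ℤ)).eval (-x)
      = (-1 : ℝ) ^ n * (Polynomial.Chebyshev.T ℝ (n : ℤ)).eval x ∧
    (Polynomial.Chebyshev.T ℝ ((n : ℤ) + 1)).eval (-x)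
      = (-1 : ℝ) ^ (n + 1) * (Polynomial.Chebyshev.T ℝ ((n : ℤ) + 1)).eval x := by
  intro n
  induction n with
  | zero => simp [Polynomial.Chebyshev.T_zero, Polynomial.Chebyshev.T_one]
  | succ n ih =>
    refine ⟨by push_cast; exact ih.2, ?_⟩
    have h2 := congrArg (Polynomial.eval x) (Polynomial.Chebyshev.T_add_two ℝ (n : ℤ))
    have h2' := congrArg (Polynomial.eval (-x)) (Polynomial.Chebyshev.T_add_two ℝ (n : ℤ))
    simp only [Polynomial.eval_sub, Polynomial.eval_mul, Polynomial.eval_ofNat,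
      Polynomial.eval_X] at h2 h2'
    have h1 : ((n : ℤ) + 1 + 1) = (n : ℤ) + 2 := by ring
    push_cast
    rw [h1, h2, h2', ih.1, ih.2]
    ring

private lemma T_eval_one_le (n : ℕ) (x : ℝ) (hx : 1 ≤ |x|) (hn : Even n) :
    1 ≤ (Polynomial.Chebyshev.T ℝ (n : ℤ)).eval x := by
  rcases le_or_gt 1 x with h | h
  · exact (T_eval_ge x h n).1
  · have hx' : x ≤ -1 := by
      rcases abs_cases x with ⟨he, _⟩ | ⟨he, _⟩ <;> rw [he] at hx <;> linarith
    have h1 : 1 ≤ (Polynomial.Chebyshev.T ℝ (n : ℤ)).eval (-x) :=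
      (T_eval_ge (-x) (by linarith) n).1
    have h2 := (T_eval_neg (-x) n).1
    rw [neg_neg] at h2
    rw [h2, hn.neg_one_pow, one_mul]
    exact h1

/-- For `0 < a < b` and even `d`, with `C = sup_{t∈[a,b]}(T_{[a,b],d}(t)+1) = 2`,
the rational function `g(Λ) = (2 − (T_{[a,b],d}(Λ)+1)) / ((Λ−a)(b−Λ))` is a
polynomial that is nonnegative on all of `ℝ`. -/
theorem chebyshev_quotient_poly_nonneg (a b : ℝ) (ha : 0 < a) (hab : a < b)
    (d : ℕ) (hd : Even d)
    (hsup : IsGreatest ((fun t => (chebyOn a b d).eval t + 1) '' Set.Icc a b) 2) :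
    ∃ g : Polynomial ℝ,
      Polynomial.C 2 - (chebyOn a b d + 1)
        = g * ((Polynomial.X - Polynomial.C a) * (Polynomial.C b - Polynomial.X)) ∧
      ∀ t : ℝ, 0 ≤ g.eval t := by
  have hba : (0:ℝ) < b - a := by linarith
  set p : Polynomial ℝ := Polynomial.C 2 - (chebyOn a b d + 1) with hp
  -- evaluation of the rescaled argument
  have harg : ∀ t : ℝ, (chebyOn a b d).eval t
      = (Polynomial.Chebyshev.T ℝ (d : ℤ)).eval ((2 * t - (b + a)) / (b - a)) := by
    intro t
    simp [chebyOn]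
    ring_nf
  have hTone : (Polynomial.Chebyshev.T ℝ (d : ℤ)).eval 1 = 1 := by
    have h1 := (T_eval_ge 1 le_rfl d).1
    have h2 : ((fun t => (chebyOn a b d).eval t + 1) '' Set.Icc a b) ⊆ Set.Iic 2 :=
      fun y hy => hsup.2 hy
    have hb : (chebyOn a b d).eval b + 1 ≤ 2 :=
      h2 ⟨b, Set.right_mem_Icc.mpr hab.le, rfl⟩
    rw [harg b] at hb
    have : (2 * b - (b + a)) / (b - a) = 1 := by field_simp; ring
    rw [this] at hb
    linarith
  have hevalb : p.eval b = 0 := by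
    simp [hp, harg b]
    have : (2 * b - (b + a)) / (b - a) = 1 := by field_simp; ring
    rw [this, hTone]; ring
  have hevala : p.eval a = 0 := by
    have hTneg : (Polynomial.Chebyshev.T ℝ (d : ℤ)).eval (-1) = 1 := by
      have := (T_eval_neg 1 d).1
      rw [this, hTone, hd.neg_one_pow, one_mul]
    simp [hp, harg a]
    have : (2 * a - (b + a)) / (b - a) = -1 := by field_simp; ring
    rw [this, hTneg]; ring
  -- factor out the roots
  obtain ⟨q, hq⟩ := Polynomial.dvd_iff_isRoot.mpr hevala
  have hqb : q.eval b = 0 := by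
    have := hevalb
    rw [hq] at this
    simp at this
    rcases this with h | h
    · exfalso; linarith
    · exact h
  obtain ⟨r, hr⟩ := Polynomial.dvd_iff_isRoot.mpr hqb
  have hfac : p = (-r) * ((Polynomial.X - Polynomial.C a) * (Polynomial.C b - Polynomial.X)) := by
    rw [hq, hr]; ring
  refine ⟨-r, hfac, ?_⟩
  -- nonnegativity away from a, b
  have hptle : ∀ t : ℝ, t ∈ Set.Icc a b → p.eval t ≥ 0 := by
    intro t ht
    have : (chebyOn a b d).eval t + 1 ≤ 2 := hsup.2 ⟨t, ht, rfl⟩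
    simp [hp]; linarith
  have hptout : ∀ t : ℝ, t ∉ Set.Icc a b → p.eval t ≤ 0 := by
    intro t ht
    have habs : 1 ≤ |(2 * t - (b + a)) / (b - a)| := by
      rw [Set.mem_Icc, not_and_or] at ht
      rw [le_abs]
      rcases ht with h | h
      · push_neg at h
        right
        have : (2 * t - (b + a)) / (b - a) ≤ -1 := by rw [div_le_iff₀ hba]; linarith
        linarith
      · push_neg at h
        left
        rw [le_div_iff₀ hba]
        linarith
    have := T_eval_one_le d _ habs hd
    simp [hp, harg t]; linarith
  have hg : ∀ t : ℝ, t ≠ a → t ≠ b → 0 ≤ (-r).eval t := by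
    intro t hta htb
    have hev : p.eval t = (-r).eval t * ((t - a) * (b - t)) := by
      rw [hfac]; simp
    rcases le_or_gt t a with h1 | h1
    · have hlt : t < a := lt_of_le_of_ne h1 hta
      have hout : t ∉ Set.Icc a b := by simp [Set.mem_Icc]; intro h; linarith
      have hple := hptout t hout
      have hneg : (t - a) * (b - t) < 0 := mul_neg_of_neg_of_pos (by linarith) (by linarith)
      nlinarith [hev ▸ hple]
    rcases le_or_gt t b with h2 | h2
    · have hin : t ∈ Set.Icc a b := ⟨h1.le, h2⟩
      have hpge := hptle t hin
      have hlt : t < b := lt_of_le_of_ne h2 htb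
      have hpos : 0 < (t - a) * (b - t) := mul_pos (by linarith) (by linarith)
      nlinarith [hev ▸ hpge]
    · have hout : t ∉ Set.Icc a b := by simp [Set.mem_Icc]; intro h; linarith
      have hple := hptout t hout
      have hneg : (t - a) * (b - t) < 0 := mul_neg_of_pos_of_neg (by linarith) (by linarith)
      nlinarith [hev ▸ hple]
  -- extend to all of ℝ by continuity
  intro t
  by_cases hta : t ≠ a ∧ t ≠ b
  · exact hg t hta.1 hta.2
  · push_neg at hta
    have hcont : ContinuousAt (fun s => (-r).eval s) t := (Polynomial.continuous _).continuousAt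
    have htend : Filter.Tendsto (fun s => (-r).eval s) (nhdsWithin t {t}ᶜ) (nhds ((-r).eval t)) :=
      hcont.continuousWithinAt.tendsto
    haveI hNe : (nhdsWithin t ({t}ᶜ : Set ℝ)).NeBot := inferInstance
    refine ge_of_tendsto htend ?_
    have h1 : ∀ᶠ s in nhdsWithin t {t}ᶜ, s ≠ t :=
      eventually_mem_nhdsWithin.mono (fun s hs => hs)
    -- the other endpoint
    rcases eq_or_ne t a with rfl | hne
    · have h2 : ∀ᶠ s in nhdsWithin t {t}ᶜ, s ≠ b := by
        have : {b}ᶜ ∈ nhds t := IsOpen.mem_nhds isOpen_compl_singleton (by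
          simp; intro h; exact absurd h hab.ne)
        exact Filter.eventually_iff_exists_mem.mpr ⟨{b}ᶜ, nhdsWithin_le_nhds this, fun s hs => hs⟩
      filter_upwards [h1, h2] with s hs1 hs2
      exact hg s hs1 hs2
    · have hb : t = b := by tauto
      subst hb
      have h2 : ∀ᶠ s in nhdsWithin t {t}ᶜ, s ≠ a := by
        have : {a}ᶜ ∈ nhds t := IsOpen.mem_nhds isOpen_compl_singleton (by
          simp; intro h; exact absurd h.symm hab.ne)
        exact Filter.eventually_iff_exists_mem.mpr ⟨{a}ᶜ, nhdsWithin_le_nhds this, fun s hs => hs⟩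
      filter_upwards [h1, h2] with s hs1 hs2
      exact hg s hs2 hs1
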